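/- Let k be an algebraically closed field and let g, h ∈ k[x, y, z] be nonzero polynomials that are relatively prime, i.e. every common divisor of g and h in k[x, y, z] is a unit. Then the set of λ ∈ k for which the specializations g(λ, y, z) and h(λ, y, z) are not relatively prime in k[y, z] is finite; equivalently, there is a co-finite subset L ⊆ k such that for every λ ∈ L, every common divisor of g(λ, y, z) and h(λ, y, z) in k[y, z] is a unit. -/

import Mathlib

open MvPolynomial

/-- Transfer of relative primality from `R[X]` to `K[X]`, `K` the fraction field. -/
private lemma isRelPrime_map_fraction {R : Type*} [CommRing R] [IsDomain R]
    [NormalizedGCDMonoid R] {K : Type*} [Field K] [Algebra R K] [IsFractionRing R K]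
    {G H : Polynomial R} (hG : G ≠ 0) (hrel : IsRelPrime G H) :
    IsRelPrime (G.map (algebraMap R K)) (H.map (algebraMap R K)) := by
  intro d hdG hdH
  have hinj : Function.Injective (algebraMap R K) := IsFractionRing.injective R K
  have hd0 : d ≠ 0 := by
    rintro rfl
    exact hG ((Polynomial.map_eq_zero_iff hinj).mp (zero_dvd_iff.mp hdG))
  obtain ⟨b, hb⟩ := IsLocalization.integerNormalization_map_to_map (nonZeroDivisors R) d
  set d' := IsLocalization.integerNormalization (nonZeroDivisors R) d with hd'def
  have hbK : algebraMap R K (b : R) ≠ 0 :=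
    IsFractionRing.to_map_ne_zero_of_mem_nonZeroDivisors b.2
  have hbsmul : Polynomial.map (algebraMap R K) d' = Polynomial.C (algebraMap R K (b : R)) * d := by
    rw [hb, ← Polynomial.smul_eq_C_mul, algebraMap_smul]
  have hd'0 : d' ≠ 0 := by
    intro h0
    rw [h0, Polynomial.map_zero] at hbsmul
    exact (mul_ne_zero (by simpa using hbK) hd0) hbsmul.symm
  set p := d'.primPart with hpdef
  have hpprim : p.IsPrimitive := Polynomial.isPrimitive_primPart d'
  have hcont0 : d'.content ≠ 0 := fun h0 => hd'0 (Polynomial.content_eq_zero_iff.mp h0)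
  have hcontK : algebraMap R K d'.content ≠ 0 := fun h0 =>
    hcont0 (IsFractionRing.to_map_eq_zero_iff.mp h0)
  have heq : Polynomial.C (algebraMap R K d'.content) * p.map (algebraMap R K)
      = Polynomial.C (algebraMap R K (b : R)) * d := by
    rw [← hbsmul]
    conv_rhs => rw [d'.eq_C_content_mul_primPart]
    rw [Polynomial.map_mul, Polynomial.map_C]
  have u1 : IsUnit (Polynomial.C (algebraMap R K (b : R))) :=
    (hbK.isUnit).map Polynomial.C
  have u2 : IsUnit (Polynomial.C (algebraMap R K d'.content)) :=
    (hcontK.isUnit).map Polynomial.C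
  -- `map p` divides `map G` and `map H`
  have hdvdmap : ∀ Q : Polynomial R, d ∣ Q.map (algebraMap R K) →
      p ∣ Q := by
    intro Q hdQ
    have h1 : p.map (algebraMap R K) ∣ Q.map (algebraMap R K) := by
      have h2 : p.map (algebraMap R K) ∣ Polynomial.C (algebraMap R K (b : R)) * d :=
        heq ▸ Dvd.intro_left _ rfl
      have h3 : p.map (algebraMap R K) ∣
          Polynomial.C (algebraMap R K (b : R)) * Q.map (algebraMap R K) :=
        h2.trans (mul_dvd_mul_left _ hdQ)
      exact (IsUnit.dvd_mul_left u1).mp h3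
    by_cases hQ0 : Q = 0
    · simp [hQ0]
    have hQc : algebraMap R K Q.content ≠ 0 := fun h0 =>
      hQ0 (Polynomial.content_eq_zero_iff.mp (IsFractionRing.to_map_eq_zero_iff.mp h0))
    have h4 : p.map (algebraMap R K) ∣ (Q.primPart).map (algebraMap R K) := by
      have h5 : Q.map (algebraMap R K)
          = Polynomial.C (algebraMap R K Q.content) * (Q.primPart).map (algebraMap R K) := by
        conv_lhs => rw [Q.eq_C_content_mul_primPart]
        rw [Polynomial.map_mul, Polynomial.map_C]
      rw [h5] at h1
      exact (IsUnit.dvd_mul_left (hQc.isUnit.map Polynomial.C)).mp h1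
    exact (hpprim.dvd_of_fraction_map_dvd_fraction_map h4).trans
      Q.primPart_dvd
  have hup : IsUnit p := hrel (hdvdmap G hdG) (hdvdmap H hdH)
  have humap : IsUnit (p.map (algebraMap R K)) := by
    have := hup.map (Polynomial.mapRingHom (algebraMap R K))
    simpa using this
  have : IsUnit (Polynomial.C (algebraMap R K (b : R)) * d) := by
    rw [← heq]; exact u2.mul humap
  exact (IsUnit.mul_iff.mp this).2

/-- For relatively prime nonzero `G, H` over a UFD with normalization,
some nonzero constant lies in the ideal `(G, H)`. -/
private lemma exists_C_mem_span_pair {R : Type*} [CommRing R] [IsDomain R]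
    [NormalizedGCDMonoid R] {G H : Polynomial R} (hG : G ≠ 0) (hH : H ≠ 0)
    (hrel : IsRelPrime G H) :
    ∃ c : R, c ≠ 0 ∧ Polynomial.C c ∈ Ideal.span {G, H} := by
  set K := FractionRing R
  have h2 : IsRelPrime (G.map (algebraMap R K)) (H.map (algebraMap R K)) :=
    isRelPrime_map_fraction hG hrel
  obtain ⟨u, v, huv⟩ := h2.isCoprime
  obtain ⟨b, hb⟩ := IsLocalization.integerNormalization_map_to_map (nonZeroDivisors R) u
  obtain ⟨c, hc⟩ := IsLocalization.integerNormalization_map_to_map (nonZeroDivisors R) v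
  set u' := IsLocalization.integerNormalization (nonZeroDivisors R) u with hu'def
  set v' := IsLocalization.integerNormalization (nonZeroDivisors R) v with hv'def
  have hb' : Polynomial.map (algebraMap R K) u' = Polynomial.C (algebraMap R K (b : R)) * u := by
    rw [hb, ← Polynomial.smul_eq_C_mul, algebraMap_smul]
  have hc' : Polynomial.map (algebraMap R K) v' = Polynomial.C (algebraMap R K (c : R)) * v := by
    rw [hc, ← Polynomial.smul_eq_C_mul, algebraMap_smul]
  refine ⟨(b : R) * (c : R),
    mul_ne_zero (nonZeroDivisors.ne_zero b.2) (nonZeroDivisors.ne_zero c.2), ?_⟩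
  have key : Polynomial.C ((b : R) * (c : R))
      = (u' * Polynomial.C (c : R)) * G + (v' * Polynomial.C (b : R)) * H := by
    apply Polynomial.map_injective (algebraMap R K) (IsFractionRing.injective R K)
    rw [Polynomial.map_add, Polynomial.map_mul, Polynomial.map_mul, Polynomial.map_mul,
      Polynomial.map_mul, Polynomial.map_C, Polynomial.map_C, Polynomial.map_C, hb', hc',
      map_mul, Polynomial.C_mul]
    linear_combination
      (-(Polynomial.C (algebraMap R K (b : R)) * Polynomial.C (algebraMap R K (c : R)))) * huv
  rw [key]
  exact Ideal.add_mem _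
    (Ideal.mul_mem_left _ _ (Ideal.subset_span (Set.mem_insert _ _)))
    (Ideal.mul_mem_left _ _ (Ideal.subset_span (Set.mem_insert_of_mem _ rfl)))

/-- Elimination of the variable `0` : some nonzero polynomial in the remaining
variables lies in the ideal `(g, h)`. -/
private lemma exists_elim {k : Type*} [Field k] {n : ℕ}
    {g h : MvPolynomial (Fin (n + 1)) k} (hg : g ≠ 0) (hh : h ≠ 0)
    (hrel : IsRelPrime g h) :
    ∃ c : MvPolynomial (Fin n) k, c ≠ 0 ∧ rename Fin.succ c ∈ Ideal.span {g, h} := by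
  classical
  letI : NormalizationMonoid (MvPolynomial (Fin n) k) :=
    UniqueFactorizationMonoid.normalizationMonoid.toNormalizationMonoid
  letI : NormalizedGCDMonoid (MvPolynomial (Fin n) k) :=
    UniqueFactorizationMonoid.toNormalizedGCDMonoid _
  set e := finSuccEquiv k n with hedef
  have hrc : ∀ c : MvPolynomial (Fin n) k, e (rename Fin.succ c) = Polynomial.C c := by
    have hcomp : (e.toAlgHom.comp (rename Fin.succ) :
        MvPolynomial (Fin n) k →ₐ[k] Polynomial (MvPolynomial (Fin n) k))
        = Polynomial.CAlgHom := by
      apply MvPolynomial.algHom_ext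
      intro i
      simp [hedef, finSuccEquiv_X_succ, Polynomial.CAlgHom]
    intro c
    simpa using DFunLike.congr_fun hcomp c
  have hG : e g ≠ 0 := fun h0 => hg (by simpa using congrArg e.symm h0)
  have hH : e h ≠ 0 := fun h0 => hh (by simpa using congrArg e.symm h0)
  have hrel' : IsRelPrime (e g) (e h) := by
    intro d h1 h2
    have h1' : e.symm d ∣ g := by
      obtain ⟨r, hr⟩ := h1
      exact ⟨e.symm r, by simpa using congrArg e.symm hr⟩
    have h2' : e.symm d ∣ h := by
      obtain ⟨r, hr⟩ := h2
      exact ⟨e.symm r, by simpa using congrArg e.symm hr⟩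
    have := (hrel h1' h2').map e
    simpa using this
  obtain ⟨c, hc0, hcs⟩ := exists_C_mem_span_pair hG hH hrel'
  rw [Ideal.mem_span_pair] at hcs
  obtain ⟨a, b, hab⟩ := hcs
  refine ⟨c, hc0, Ideal.mem_span_pair.mpr ⟨e.symm a, e.symm b, ?_⟩⟩
  apply e.injective
  rw [map_add, map_mul, map_mul, hrc]
  simp [hab]

/-- Permuted version of `exists_elim`. -/
private lemma exists_elim_perm {k : Type*} [Field k]
    {g h : MvPolynomial (Fin 3) k} (hg : g ≠ 0) (hh : h ≠ 0) (hrel : IsRelPrime g h)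
    (τ : Equiv.Perm (Fin 3)) :
    ∃ c : MvPolynomial (Fin 2) k, c ≠ 0 ∧
      rename (⇑τ.symm ∘ Fin.succ) c ∈ Ideal.span {g, h} := by
  have hinj := rename_injective (R := k) ⇑τ τ.injective
  have hg' : rename ⇑τ g ≠ 0 := fun h0 => hg (hinj (by simpa using h0))
  have hh' : rename ⇑τ h ≠ 0 := fun h0 => hh (hinj (by simpa using h0))
  have hback : ∀ q : MvPolynomial (Fin 3) k, rename ⇑τ.symm (rename ⇑τ q) = q := by
    intro q
    rw [rename_rename]
    simp [Equiv.symm_comp_self]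
  have hrel' : IsRelPrime (rename ⇑τ g) (rename ⇑τ h) := by
    intro d h1 h2
    have k1 : rename ⇑τ.symm d ∣ g := by
      obtain ⟨r, hr⟩ := h1
      refine ⟨rename ⇑τ.symm r, ?_⟩
      have := congrArg (rename ⇑τ.symm) hr
      rw [map_mul, hback] at this
      exact this
    have k2 : rename ⇑τ.symm d ∣ h := by
      obtain ⟨r, hr⟩ := h2
      refine ⟨rename ⇑τ.symm r, ?_⟩
      have := congrArg (rename ⇑τ.symm) hr
      rw [map_mul, hback] at this
      exact this
    have := (hrel k1 k2).map (rename ⇑τ : MvPolynomial (Fin 3) k →ₐ[k] MvPolynomial (Fin 3) k)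
    have h3 : rename ⇑τ (rename ⇑τ.symm d) = d := by
      rw [rename_rename]; simp [Equiv.self_comp_symm]
    simpa [h3] using this
  obtain ⟨c, hc0, hcs⟩ := exists_elim hg' hh' hrel'
  rw [Ideal.mem_span_pair] at hcs
  obtain ⟨a, b, hab⟩ := hcs
  refine ⟨c, hc0, Ideal.mem_span_pair.mpr ⟨rename ⇑τ.symm a, rename ⇑τ.symm b, ?_⟩⟩
  have := congrArg (rename ⇑τ.symm) hab
  rw [map_add, map_mul, map_mul, hback, hback, rename_rename] at this
  exact this

/-- Finiteness of the set of `λ` where a nonzero two-variable polynomial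
specializes to zero. -/
private lemma finite_eval_zero {k : Type*} [Field k]
    {c : MvPolynomial (Fin 2) k} (hc : c ≠ 0) :
    {lam : k | (aeval ![C lam, X 0] c : MvPolynomial (Fin 1) k) = 0}.Finite := by
  have hP : finSuccEquiv k 1 c ≠ 0 :=
    fun h0 => hc (by simpa using congrArg (finSuccEquiv k 1).symm h0)
  have key : ∀ lam : k, (aeval ![C lam, X 0] c : MvPolynomial (Fin 1) k)
      = Polynomial.eval (C lam) (finSuccEquiv k 1 c) := by
    intro lam
    rw [← Polynomial.coe_aeval_eq_eval]
    have hcomp : (aeval ![C lam, X 0] : MvPolynomial (Fin 2) k →ₐ[k] MvPolynomial (Fin 1) k)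
        = ((Polynomial.aeval (C lam : MvPolynomial (Fin 1) k)).restrictScalars k).comp
            (finSuccEquiv k 1).toAlgHom := by
      apply MvPolynomial.algHom_ext
      intro i
      refine Fin.cases ?_ (fun j => ?_) i
      · simp [finSuccEquiv_X_zero]
      · have hj : j = 0 := Subsingleton.elim _ _
        subst hj
        simp only [AlgHom.coe_comp, AlgHom.coe_restrictScalars', AlgEquiv.toAlgHom_eq_coe,
          AlgHom.coe_coe, Function.comp_apply, finSuccEquiv_X_succ, Polynomial.aeval_C]
        simp [Matrix.cons_val_one]
        rw [show (1 : Fin 2) = Fin.succ 0 from rfl, finSuccEquiv_X_succ]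
        simp
    simpa using DFunLike.congr_fun hcomp c
  have hset : {lam : k | (aeval ![C lam, X 0] c : MvPolynomial (Fin 1) k) = 0}
      = (fun lam : k => (C lam : MvPolynomial (Fin 1) k)) ⁻¹'
        {x | (finSuccEquiv k 1 c).IsRoot x} := by
    ext lam
    simp only [Set.mem_setOf_eq, Set.mem_preimage, key, Polynomial.IsRoot.def]
  rw [hset]
  exact Set.Finite.preimage (Set.injOn_of_injective (C_injective _ k))
    (Polynomial.finite_setOf_isRoot hP)

private lemma degreeOf_rename_eq_zero {k : Type*} [CommSemiring k] {σ τ : Type*}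
    (f : σ → τ) (p : MvPolynomial σ k) {i : τ} (hi : ∀ s, f s ≠ i) :
    degreeOf i (rename f p) = 0 := by
  classical
  rw [degreeOf_def, Multiset.count_eq_zero]
  intro hmem
  obtain ⟨s, _, hs⟩ := Multiset.mem_map.mp (degrees_rename f p hmem)
  exact hi s hs

private lemma degreeOf_le_of_dvd {k : Type*} [Field k] {n : ℕ}
    {d A : MvPolynomial (Fin (n + 1)) k} (i : Fin (n + 1)) (hdvd : d ∣ A) (hA : A ≠ 0) :
    degreeOf i d ≤ degreeOf i A := by
  classical
  have key : ∀ d A : MvPolynomial (Fin (n + 1)) k, d ∣ A → A ≠ 0 →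
      degreeOf 0 d ≤ degreeOf 0 A := by
    intro d A hdvd hA
    rw [← natDegree_finSuccEquiv, ← natDegree_finSuccEquiv]
    refine Polynomial.natDegree_le_of_dvd ?_ ?_
    · obtain ⟨r, rfl⟩ := hdvd
      exact ⟨finSuccEquiv k n r, by rw [map_mul]⟩
    · exact fun h0 => hA (by simpa using congrArg (finSuccEquiv k n).symm h0)
  have h1 : rename ⇑(Equiv.swap i 0) d ∣ rename ⇑(Equiv.swap i 0) A := by
    obtain ⟨r, rfl⟩ := hdvd
    exact ⟨rename ⇑(Equiv.swap i 0) r, by rw [map_mul]⟩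
  have h2 : rename ⇑(Equiv.swap i 0) A ≠ 0 := fun h0 =>
    hA (rename_injective _ (Equiv.swap i 0).injective (by simpa using h0))
  have h3 := key _ _ h1 h2
  rw [← degreeOf_rename_of_injective (Equiv.swap i 0).injective i,
    ← degreeOf_rename_of_injective (Equiv.swap i 0).injective i,
    Equiv.swap_apply_left]
  exact h3

private lemma isUnit_of_dvd_dvd {k : Type*} [Field k] {d A B : MvPolynomial (Fin 2) k}
    (hA : A ≠ 0) (hB : B ≠ 0) (hdA : d ∣ A) (hdB : d ∣ B)
    (hA1 : degreeOf 1 A = 0) (hB0 : degreeOf 0 B = 0) : IsUnit d := by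
  have h1 : degreeOf 1 d = 0 := Nat.le_zero.mp (hA1 ▸ degreeOf_le_of_dvd 1 hdA hA)
  have h0 : degreeOf 0 d = 0 := Nat.le_zero.mp (hB0 ▸ degreeOf_le_of_dvd 0 hdB hB)
  have htd : ∀ m ∈ d.support, ∀ x : Fin 2, m x = 0 := by
    intro m hm x
    have hle := monomial_le_degreeOf x hm
    fin_cases x
    · exact Nat.le_zero.mp (h0 ▸ hle)
    · exact Nat.le_zero.mp (h1 ▸ hle)
  obtain ⟨a, rfl⟩ : ∃ a, d = C a := by
    refine ⟨coeff 0 d, (MvPolynomial.ext _ _ fun m => ?_)⟩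
    by_cases hm : m = 0
    · subst hm; simp [coeff_C]
    · have hz : coeff m d = 0 := by
        by_contra hne
        exact hm (Finsupp.ext (htd m (mem_support_iff.mpr hne)))
      rw [hz, coeff_C, if_neg (fun h => hm h.symm)]
  have ha : a ≠ 0 := by
    rintro rfl
    exact hA (zero_dvd_iff.mp (by simpa using hdA))
  exact ha.isUnit.map (C : k →+* MvPolynomial (Fin 2) k)

theorem finite_not_coprime_specializations
    (k : Type*) [Field k] [IsAlgClosed k]
    (g h : MvPolynomial (Fin 3) k) (hg : g ≠ 0) (hh : h ≠ 0)
    (hcop : ∀ d : MvPolynomial (Fin 3) k, d ∣ g → d ∣ h → IsUnit d) :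
    {lam : k | ¬ ∀ d : MvPolynomial (Fin 2) k,
        d ∣ aeval ![C lam, X 0, X 1] g →
        d ∣ aeval ![C lam, X 0, X 1] h → IsUnit d}.Finite := by
  classical
  have hrel : IsRelPrime g h := fun d h1 h2 => hcop d h1 h2
  obtain ⟨c₁, hc₁0, hc₁⟩ := exists_elim_perm hg hh hrel (finRotate 3)
  obtain ⟨c₂, hc₂0, hc₂⟩ := exists_elim_perm hg hh hrel (Equiv.swap 0 1)
  rw [Ideal.mem_span_pair] at hc₁ hc₂
  obtain ⟨a₁, b₁, hab₁⟩ := hc₁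
  obtain ⟨a₂, b₂, hab₂⟩ := hc₂
  apply Set.Finite.subset ((finite_eval_zero hc₁0).union (finite_eval_zero hc₂0))
  intro lam hlam
  rw [Set.mem_union]
  by_contra hcon
  push_neg at hcon
  obtain ⟨hA0, hB0⟩ := hcon
  rw [Set.mem_setOf_eq] at hA0 hB0
  apply hlam
  intro d hd1 hd2
  -- the two specializations of the eliminated polynomials
  have hu₁ : (⇑(finRotate 3).symm ∘ Fin.succ) = (![0, 1] : Fin 2 → Fin 3) := by
    funext i; fin_cases i <;> decide
  have hu₂ : (⇑(Equiv.swap (0 : Fin 3) 1).symm ∘ Fin.succ) = (![0, 2] : Fin 2 → Fin 3) := by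
    funext i; fin_cases i <;> decide
  have hA₁ : aeval ![C lam, X 0, X 1] (rename (⇑(finRotate 3).symm ∘ Fin.succ) c₁)
      = rename (fun _ : Fin 1 => (0 : Fin 2)) (aeval ![C lam, X 0] c₁) := by
    rw [aeval_rename, hu₁]
    have hcomp := MvPolynomial.comp_aeval (R := k)
      (f := (![C lam, X 0] : Fin 2 → MvPolynomial (Fin 1) k))
      ((rename (fun _ : Fin 1 => (0 : Fin 2))) :
        MvPolynomial (Fin 1) k →ₐ[k] MvPolynomial (Fin 2) k)
    have h2 := DFunLike.congr_fun hcomp c₁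
    rw [AlgHom.comp_apply] at h2
    have hvec : ((![C lam, X 0, X 1] : Fin 3 → MvPolynomial (Fin 2) k) ∘ ![0, 1])
        = fun i => (rename (fun _ : Fin 1 => (0 : Fin 2)))
            ((![C lam, X 0] : Fin 2 → MvPolynomial (Fin 1) k) i) := by
      funext i
      fin_cases i <;> simp
    rw [h2, ← hvec]
  have hB₁ : aeval ![C lam, X 0, X 1] (rename (⇑(Equiv.swap (0 : Fin 3) 1).symm ∘ Fin.succ) c₂)
      = rename (fun _ : Fin 1 => (1 : Fin 2)) (aeval ![C lam, X 0] c₂) := by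
    rw [aeval_rename, hu₂]
    have hcomp := MvPolynomial.comp_aeval (R := k)
      (f := (![C lam, X 0] : Fin 2 → MvPolynomial (Fin 1) k))
      ((rename (fun _ : Fin 1 => (1 : Fin 2))) :
        MvPolynomial (Fin 1) k →ₐ[k] MvPolynomial (Fin 2) k)
    have h2 := DFunLike.congr_fun hcomp c₂
    rw [AlgHom.comp_apply] at h2
    have hvec : ((![C lam, X 0, X 1] : Fin 3 → MvPolynomial (Fin 2) k) ∘ ![0, 2])
        = fun i => (rename (fun _ : Fin 1 => (1 : Fin 2)))
            ((![C lam, X 0] : Fin 2 → MvPolynomial (Fin 1) k) i) := by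
      funext i
      fin_cases i <;> simp
    rw [h2, ← hvec]
  have hdA : d ∣ rename (fun _ : Fin 1 => (0 : Fin 2)) (aeval ![C lam, X 0] c₁) := by
    rw [← hA₁, ← hab₁, map_add, map_mul, map_mul]
    exact dvd_add (Dvd.dvd.mul_left hd1 _) (Dvd.dvd.mul_left hd2 _)
  have hdB : d ∣ rename (fun _ : Fin 1 => (1 : Fin 2)) (aeval ![C lam, X 0] c₂) := by
    rw [← hB₁, ← hab₂, map_add, map_mul, map_mul]
    exact dvd_add (Dvd.dvd.mul_left hd1 _) (Dvd.dvd.mul_left hd2 _)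
  have hinj1 : Function.Injective (fun _ : Fin 1 => (0 : Fin 2)) :=
    fun a b _ => Subsingleton.elim a b
  have hinj2 : Function.Injective (fun _ : Fin 1 => (1 : Fin 2)) :=
    fun a b _ => Subsingleton.elim a b
  have hAne : rename (fun _ : Fin 1 => (0 : Fin 2)) (aeval ![C lam, X 0] c₁) ≠ 0 :=
    fun h0 => hA0 (rename_injective _ hinj1 (by simpa using h0))
  have hBne : rename (fun _ : Fin 1 => (1 : Fin 2)) (aeval ![C lam, X 0] c₂) ≠ 0 :=
    fun h0 => hB0 (rename_injective _ hinj2 (by simpa using h0))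
  exact isUnit_of_dvd_dvd hAne hBne hdA hdB
    (degreeOf_rename_eq_zero _ _ (fun s => by decide))
    (degreeOf_rename_eq_zero _ _ (fun s => by decide))
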